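/- Let M = M_1 ⊕ M_2 be a fully coHopfian right R-module that has couniserial dimension. Then c.u.dim(M_1) + c.u.dim(M_2) ≤ c.u.dim(M), where + denotes ordinal addition. -/

import Mathlib

universe u v w

/-- A module is *uniform* if it is nonzero and any two nonzero submodules intersect
nontrivially. -/
def IsUniformModule (R : Type u) [Ring R] (M : Type v) [AddCommGroup M] [Module R M] : Prop :=
  Nontrivial M ∧ ∀ N₁ N₂ : Submodule R M, N₁ ≠ ⊥ → N₂ ≠ ⊥ → N₁ ⊓ N₂ ≠ ⊥

/-- The classes `ζ_α`, defined by transfinite induction: `ζ_1` is the class of uniform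
modules, and for `α > 1`, `M ∈ ζ_α` iff every nonzero submodule `N` of `M` with `N ≇ M`
lies in `ζ_β` for some `β < α`. -/
def ModuleZeta (R : Type u) [Ring R] (α : Ordinal.{v}) (M : Type v) [AddCommGroup M]
    [Module R M] : Prop :=
  (α = 1 ∧ IsUniformModule R M) ∨
    (1 < α ∧ ∀ N : Submodule R M, N ≠ ⊥ → ¬ Nonempty (N ≃ₗ[R] M) →
      ∃ β, ∃ _ : β < α, ModuleZeta R β N)
termination_by α

/-- A module has couniserial dimension iff it lies in `ζ_α` for some ordinal `α`. -/
def HasCUDim (R : Type u) [Ring R] (M : Type v) [AddCommGroup M] [Module R M] : Prop :=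
  ∃ α : Ordinal.{v}, ModuleZeta R α M

open Classical in
/-- The couniserial dimension of a module: the least `α` with `M ∈ ζ_α`, with the
convention that the zero module has couniserial dimension `0`. -/
noncomputable def cuDim (R : Type u) [Ring R] (M : Type v) [AddCommGroup M] [Module R M] :
    Ordinal.{v} :=
  if Subsingleton M then 0 else sInf {α | ModuleZeta R α M}

/-- A submodule is *essential* if it meets every nonzero submodule nontrivially. -/
def IsEssentialSubmodule (R : Type u) [Ring R] {M : Type v} [AddCommGroup M] [Module R M]
    (N : Submodule R M) : Prop :=
  ∀ K : Submodule R M, K ≠ ⊥ → N ⊓ K ≠ ⊥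

/-- A module is *indecomposable* if it is nonzero and is not an (internal) direct sum of two
nonzero submodules. -/
def IsIndecomposableModule (R : Type u) [Ring R] (M : Type v) [AddCommGroup M]
    [Module R M] : Prop :=
  Nontrivial M ∧ ∀ A B : Submodule R M, IsCompl A B → A = ⊥ ∨ B = ⊥

/-- A module is *coHopfian* if it is not isomorphic to a proper submodule of itself. -/
def IsCoHopfianModule (R : Type u) [Ring R] (M : Type v) [AddCommGroup M] [Module R M] : Prop :=
  ∀ N : Submodule R M, Nonempty (M ≃ₗ[R] N) → N = ⊤

/-- A module is *fully coHopfian* if every submodule is coHopfian. -/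
def IsFullyCoHopfianModule (R : Type u) [Ring R] (M : Type v) [AddCommGroup M]
    [Module R M] : Prop :=
  ∀ N : Submodule R M, IsCoHopfianModule R N

/-- A module `N` has the *cancellation property* if `N ⊕ A ≅ N ⊕ B` implies `A ≅ B`. -/
def HasCancellation (R : Type u) [Ring R] (N : Type v) [AddCommGroup N] [Module R N] : Prop :=
  ∀ (A B : Type v) [AddCommGroup A] [Module R A] [AddCommGroup B] [Module R B],
    Nonempty ((N × A) ≃ₗ[R] (N × B)) → Nonempty (A ≃ₗ[R] B)

/-- A module is *Dedekind finite* if it is not isomorphic to a proper direct summand of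
itself. -/
def IsDedekindFiniteModule (R : Type u) [Ring R] (M : Type v) [AddCommGroup M]
    [Module R M] : Prop :=
  ∀ A B : Submodule R M, IsCompl A B → Nonempty (M ≃ₗ[R] A) → B = ⊥

/-- A ring is *semiprime* if it has no nonzero nilpotent two-sided ideal; equivalently,
`a R a = 0` implies `a = 0`. -/
def IsSemiprimeRing (R : Type u) [Ring R] : Prop :=
  ∀ a : R, (∀ x : R, a * x * a = 0) → a = 0

/-- An ideal is an *annihilator ideal* if it is the annihilator of a subset of the ring. -/
def IsAnnihilatorIdeal (R : Type u) [Ring R] (I : Ideal R) : Prop :=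
  ∃ S : Set R, (I : Set R) = {x : R | ∀ s ∈ S, x * s = 0}

/-- A module has *uniform dimension `n`* if it contains `n` independent uniform submodules
whose direct sum is essential. -/
def HasFiniteUniformDim (R : Type u) [Ring R] (M : Type v) [AddCommGroup M] [Module R M]
    (n : ℕ) : Prop :=
  ∃ U : Fin n → Submodule R M, iSupIndep U ∧ (∀ i, IsUniformModule R (U i)) ∧
    IsEssentialSubmodule R (⨆ i, U i)

/-- A ring is *Goldie* if it has the ascending chain condition on annihilator ideals and
finite uniform dimension as a module over itself. -/
def IsGoldieRing (R : Type u) [Ring R] : Prop :=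
  (∀ f : ℕ → Ideal R, (∀ n, IsAnnihilatorIdeal R (f n)) → Monotone f →
      ∃ n, ∀ k, n ≤ k → f k = f n) ∧
    ∃ n : ℕ, HasFiniteUniformDim R R n

section AuxLemmas

variable {R : Type u} [Ring R]

theorem aux_map_ne_bot {M M' : Type v} [AddCommGroup M] [Module R M] [AddCommGroup M']
    [Module R M'] {f : M →ₗ[R] M'} (hf : Function.Injective f) {p : Submodule R M}
    (hp : p ≠ ⊥) : p.map f ≠ ⊥ := by
  intro h
  exact hp (Submodule.map_injective_of_injective hf (by rw [h, Submodule.map_bot]))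

theorem aux_uniform_congr {M M' : Type v} [AddCommGroup M] [Module R M] [AddCommGroup M']
    [Module R M'] (e : M ≃ₗ[R] M') (h : IsUniformModule R M) : IsUniformModule R M' := by
  obtain ⟨h1, h2⟩ := h
  haveI : Nontrivial M := h1
  refine ⟨e.symm.toEquiv.nontrivial, fun N₁ N₂ hN₁ hN₂ hc => ?_⟩
  have hinj : Function.Injective (e.symm : M' →ₗ[R] M) := e.symm.injective
  have := h2 _ _ (aux_map_ne_bot hinj hN₁) (aux_map_ne_bot hinj hN₂)
  rw [← Submodule.map_inf _ hinj, hc, Submodule.map_bot] at this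
  exact this rfl

theorem aux_zeta_congr (α : Ordinal.{v}) :
    ∀ {M M' : Type v} [AddCommGroup M] [Module R M] [AddCommGroup M'] [Module R M']
      (_ : M ≃ₗ[R] M'), ModuleZeta R α M → ModuleZeta R α M' := by
  induction α using Ordinal.induction with
  | h α IH =>
    intro M M' _ _ _ _ e h
    rw [ModuleZeta] at h ⊢
    rcases h with ⟨rfl, hu⟩ | ⟨hα, h⟩
    · exact Or.inl ⟨rfl, aux_uniform_congr e hu⟩
    · refine Or.inr ⟨hα, fun N hN hNiso => ?_⟩
      have hinj : Function.Injective (e.symm : M' →ₗ[R] M) := e.symm.injective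
      have eN : (N.map (e.symm : M' →ₗ[R] M) : Type v) ≃ₗ[R] N := (e.symm.submoduleMap N).symm
      have hbot : N.map (e.symm : M' →ₗ[R] M) ≠ ⊥ := aux_map_ne_bot hinj hN
      have hiso : ¬ Nonempty ((N.map (e.symm : M' →ₗ[R] M) : Type v) ≃ₗ[R] M) := by
        rintro ⟨g⟩
        exact hNiso ⟨eN.symm.trans (g.trans e)⟩
      obtain ⟨β, hβ, hζ⟩ := h _ hbot hiso
      exact ⟨β, hβ, IH β hβ eN hζ⟩

theorem aux_zeta_mono (α : Ordinal.{v}) :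
    ∀ {P M : Type v} [AddCommGroup P] [Module R P] [AddCommGroup M] [Module R M]
      (f : P →ₗ[R] M), Function.Injective f → Nontrivial P → ModuleZeta R α M →
      ∃ β ≤ α, ModuleZeta R β P := by
  intro P M _ _ _ _ f hf hP h
  have h0 := h
  rw [ModuleZeta] at h
  rcases h with ⟨rfl, hnt, hu⟩ | ⟨hα, h⟩
  · refine ⟨1, le_refl _, ?_⟩
    rw [ModuleZeta]
    refine Or.inl ⟨rfl, hP, fun N₁ N₂ h₁ h₂ hc => ?_⟩
    have := hu _ _ (aux_map_ne_bot hf h₁) (aux_map_ne_bot hf h₂)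
    rw [← Submodule.map_inf _ hf, hc, Submodule.map_bot] at this
    exact this rfl
  · by_cases hiso : Nonempty (P ≃ₗ[R] M)
    · obtain ⟨g⟩ := hiso
      exact ⟨α, le_refl _, aux_zeta_congr α g.symm h0⟩
    · have hQbot : LinearMap.range f ≠ ⊥ := by
        obtain ⟨x, hx⟩ := exists_ne (0 : P)
        refine (Submodule.ne_bot_iff _).mpr ⟨f x, LinearMap.mem_range_self f x, fun h0 => hx ?_⟩
        exact hf (by rw [h0, map_zero])
      have eQ : (LinearMap.range f : Type v) ≃ₗ[R] P := (LinearEquiv.ofInjective f hf).symm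
      have hQiso : ¬ Nonempty ((LinearMap.range f : Type v) ≃ₗ[R] M) := by
        rintro ⟨g⟩
        exact hiso ⟨(LinearEquiv.ofInjective f hf).trans g⟩
      obtain ⟨β, hβ, hζ⟩ := h _ hQbot hQiso
      exact ⟨β, le_of_lt hβ, aux_zeta_congr β eQ hζ⟩

theorem aux_zeta_one_le {α : Ordinal.{v}} {M : Type v} [AddCommGroup M] [Module R M]
    (h : ModuleZeta R α M) : 1 ≤ α := by
  rw [ModuleZeta] at h
  rcases h with ⟨rfl, _⟩ | ⟨hα, _⟩
  · exact le_refl _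
  · exact le_of_lt hα

theorem aux_cuDim_le {α : Ordinal.{v}} {M : Type v} [AddCommGroup M] [Module R M]
    (h : ModuleZeta R α M) : cuDim R M ≤ α := by
  unfold cuDim
  split_ifs with hs
  · exact zero_le
  · exact csInf_le' h

theorem aux_zeta_cuDim {M : Type v} [AddCommGroup M] [Module R M] (h : HasCUDim R M)
    (hM : Nontrivial M) : ModuleZeta R (cuDim R M) M := by
  unfold cuDim
  rw [if_neg (not_subsingleton_iff_nontrivial.mpr hM)]
  exact csInf_mem h

theorem aux_one_le_cuDim {M : Type v} [AddCommGroup M] [Module R M] (h : HasCUDim R M)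
    (hM : Nontrivial M) : 1 ≤ cuDim R M :=
  aux_zeta_one_le (aux_zeta_cuDim h hM)

theorem aux_cuDim_congr {M M' : Type v} [AddCommGroup M] [Module R M] [AddCommGroup M']
    [Module R M'] (e : M ≃ₗ[R] M') : cuDim R M = cuDim R M' := by
  unfold cuDim
  by_cases hs : Subsingleton M
  · haveI := hs
    rw [if_pos hs, if_pos (e.symm.toEquiv.subsingleton)]
  · have hs' : ¬ Subsingleton M' := fun h => hs (by haveI := h; exact e.toEquiv.subsingleton)
    rw [if_neg hs, if_neg hs']
    congr 1
    ext γ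
    exact ⟨fun h => aux_zeta_congr γ e h, fun h => aux_zeta_congr γ e.symm h⟩

theorem aux_cohopfian_congr {M M' : Type v} [AddCommGroup M] [Module R M] [AddCommGroup M']
    [Module R M'] (e : M ≃ₗ[R] M') (h : IsCoHopfianModule R M) : IsCoHopfianModule R M' := by
  rintro N ⟨g⟩
  have hiso : Nonempty (M ≃ₗ[R] (N.map (e.symm : M' →ₗ[R] M) : Type v)) :=
    ⟨(e.trans g).trans (e.symm.submoduleMap N)⟩
  have hN' := h _ hiso
  have : N.map (e.symm : M' →ₗ[R] M) = (⊤ : Submodule R M').map (e.symm : M' →ₗ[R] M) := by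
    rw [hN', Submodule.map_top, LinearEquiv.range]
  exact Submodule.map_injective_of_injective e.symm.injective this

theorem aux_fullyCoHopfian_of_injective {P M : Type v} [AddCommGroup P] [Module R P]
    [AddCommGroup M] [Module R M] (f : P →ₗ[R] M) (hf : Function.Injective f)
    (h : IsFullyCoHopfianModule R M) : IsFullyCoHopfianModule R P := fun Q =>
  aux_cohopfian_congr (Submodule.equivMapOfInjective f hf Q).symm (h (Q.map f))

theorem aux_coHopfian_self {M : Type v} [AddCommGroup M] [Module R M]
    (h : IsFullyCoHopfianModule R M) : IsCoHopfianModule R M :=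
  aux_cohopfian_congr (Submodule.topEquiv) (h ⊤)

end AuxLemmas

section Key

variable {R : Type u} [Ring R]

theorem aux_key (α : Ordinal.{v}) :
    ∀ (M₁ M₂ : Type v) [AddCommGroup M₁] [Module R M₁] [AddCommGroup M₂] [Module R M₂],
      IsFullyCoHopfianModule R (M₁ × M₂) → HasCUDim R (M₁ × M₂) →
      cuDim R (M₁ × M₂) ≤ α →
      cuDim R M₁ + cuDim R M₂ ≤ cuDim R (M₁ × M₂) := by
  induction α using Ordinal.induction with
  | h α IH =>
  intro M₁ M₂ _ _ _ _ hfc h hle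
  by_cases h2 : Subsingleton M₂
  · have e : M₁ ≃ₗ[R] M₁ × M₂ := by
      refine LinearEquiv.ofBijective (LinearMap.inl R M₁ M₂)
        ⟨LinearMap.inl_injective, fun p => ⟨p.1, ?_⟩⟩
      exact Prod.ext rfl (Subsingleton.elim _ _)
    have h20 : cuDim R M₂ = 0 := by unfold cuDim; rw [if_pos h2]
    rw [h20, add_zero, aux_cuDim_congr e]
  by_cases h1 : Subsingleton M₁
  · have e : M₂ ≃ₗ[R] M₁ × M₂ := by
      refine LinearEquiv.ofBijective (LinearMap.inr R M₁ M₂)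
        ⟨LinearMap.inr_injective, fun p => ⟨p.2, ?_⟩⟩
      exact Prod.ext (Subsingleton.elim _ _) rfl
    have h10 : cuDim R M₁ = 0 := by unfold cuDim; rw [if_pos h1]
    rw [h10, zero_add, aux_cuDim_congr e]
  haveI hM₁ : Nontrivial M₁ := not_subsingleton_iff_nontrivial.mp h1
  haveI hM₂ : Nontrivial M₂ := not_subsingleton_iff_nontrivial.mp h2
  haveI hM : Nontrivial (M₁ × M₂) := ⟨⟨(0, 0), (Classical.choose (exists_ne (0 : M₁)), 0),
    fun hc => Classical.choose_spec (exists_ne (0 : M₁)) (congrArg Prod.fst hc).symm⟩⟩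
  have hζ : ModuleZeta R (cuDim R (M₁ × M₂)) (M₁ × M₂) := aux_zeta_cuDim h hM
  -- the product is not uniform
  have hnotunif : ¬ IsUniformModule R (M₁ × M₂) := by
    rintro ⟨-, hu⟩
    have hb1 : LinearMap.range (LinearMap.inl R M₁ M₂) ≠ ⊥ := by
      obtain ⟨x, hx⟩ := exists_ne (0 : M₁)
      exact (Submodule.ne_bot_iff _).mpr ⟨(x, 0), LinearMap.mem_range_self _ x,
        fun hc => hx (congrArg Prod.fst hc)⟩
    have hb2 : LinearMap.range (LinearMap.inr R M₁ M₂) ≠ ⊥ := by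
      obtain ⟨x, hx⟩ := exists_ne (0 : M₂)
      exact (Submodule.ne_bot_iff _).mpr ⟨(0, x), LinearMap.mem_range_self _ x,
        fun hc => hx (congrArg Prod.snd hc)⟩
    refine hu _ _ hb1 hb2 ?_
    rw [eq_bot_iff]
    rintro ⟨a, b⟩ ⟨⟨x, hx⟩, ⟨y, hy⟩⟩
    have ha : a = 0 := by
      have := congrArg Prod.fst hy; simpa using this.symm
    have hb : b = 0 := by
      have := congrArg Prod.snd hx; simpa using this.symm
    simp [ha, hb]
  have hA1 : 1 < cuDim R (M₁ × M₂) := by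
    have h0 := hζ
    rw [ModuleZeta] at h0
    rcases h0 with ⟨-, hu⟩ | ⟨hA, -⟩
    · exact absurd hu hnotunif
    · exact hA
  -- facts about M₂
  have hfc₂ : IsFullyCoHopfianModule R M₂ :=
    aux_fullyCoHopfian_of_injective (LinearMap.inr R M₁ M₂) LinearMap.inr_injective hfc
  have hcu₂ : HasCUDim R M₂ := by
    obtain ⟨γ, hγ⟩ := h
    obtain ⟨β, -, hβ⟩ := aux_zeta_mono γ (LinearMap.inr R M₁ M₂) LinearMap.inr_injective hM₂ hγ
    exact ⟨β, hβ⟩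
  have hα₂pos : 0 < cuDim R M₂ := lt_of_lt_of_le zero_lt_one (aux_one_le_cuDim hcu₂ hM₂)
  apply (Ordinal.add_le_iff hα₂pos.ne').mpr
  intro β hβ
  -- find K ≤ M₂ with K not isomorphic to M₂ and β ≤ cuDim K
  have hK : ∃ K : Submodule R M₂, ¬ Nonempty ((K : Type v) ≃ₗ[R] M₂) ∧ β ≤ cuDim R K := by
    by_cases hβ0 : β = 0
    · refine ⟨⊥, ?_, by rw [hβ0]; exact zero_le⟩
      rintro ⟨g⟩
      exact (not_subsingleton_iff_nontrivial.mpr hM₂) g.toEquiv.symm.subsingleton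
    · by_contra hcon
      push_neg at hcon
      have hβ1 : 1 ≤ β := Ordinal.one_le_iff_ne_zero.mpr hβ0
      -- every nonzero submodule of M₂ has cuDim and nonzero ones not isomorphic have cuDim < β
      have hsub : ∀ N : Submodule R M₂, N ≠ ⊥ → HasCUDim R N ∧ Nontrivial N := by
        intro N hN
        haveI hNnt : Nontrivial N := by
          obtain ⟨x, hx, hx0⟩ := (Submodule.ne_bot_iff N).mp hN
          exact ⟨⟨⟨x, hx⟩, 0, fun hc => hx0 (by simpa using congrArg Subtype.val hc)⟩⟩
        obtain ⟨γ, hγ⟩ := hcu₂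
        obtain ⟨δ, -, hδ⟩ := aux_zeta_mono γ N.subtype N.injective_subtype hNnt hγ
        exact ⟨⟨δ, hδ⟩, hNnt⟩
      rcases eq_or_lt_of_le hβ1 with hβeq | hβgt
      · -- β = 1 : every nonzero submodule of M₂ is isomorphic to M₂
        have hall : ∀ N : Submodule R M₂, N ≠ ⊥ → Nonempty ((N : Type v) ≃ₗ[R] M₂) := by
          intro N hN
          by_contra hNiso
          obtain ⟨hNcu, hNnt⟩ := hsub N hN
          have := aux_one_le_cuDim hNcu hNnt
          have hlt := hcon N (not_nonempty_iff.mp hNiso)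
          rw [← hβeq] at hlt
          exact absurd this (not_le.mpr hlt)
        -- M₂ is not uniform since cuDim M₂ > 1
        have hnu : ¬ IsUniformModule R M₂ := by
          intro hu
          have : ModuleZeta R 1 M₂ := by rw [ModuleZeta]; exact Or.inl ⟨rfl, hu⟩
          have := aux_cuDim_le this
          rw [← hβeq] at hβ
          exact absurd hβ (not_lt.mpr this)
        rw [IsUniformModule, not_and] at hnu
        push_neg at hnu
        obtain ⟨N₁, N₂, hN₁, hN₂, hinter⟩ := hnu hM₂
        obtain ⟨g⟩ := hall N₁ hN₁
        have : N₁ = ⊤ := aux_coHopfian_self hfc₂ N₁ ⟨g.symm⟩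
        rw [this, top_inf_eq] at hinter
        exact hN₂ hinter
      · -- β > 1 : M₂ ∈ ζ_β, contradicting β < cuDim M₂
        have hζβ : ModuleZeta R β M₂ := by
          rw [ModuleZeta]
          refine Or.inr ⟨hβgt, fun N hN hNiso => ?_⟩
          obtain ⟨hNcu, hNnt⟩ := hsub N hN
          exact ⟨cuDim R N, hcon N (not_nonempty_iff.mp hNiso), aux_zeta_cuDim hNcu hNnt⟩
        exact absurd hβ (not_lt.mpr (aux_cuDim_le hζβ))
  obtain ⟨K, hKiso, hKdim⟩ := hK
  -- the submodule N = M₁ ⊕ K of M₁ × M₂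
  set f : (M₁ × (K : Type v)) →ₗ[R] (M₁ × M₂) := (LinearMap.id).prodMap K.subtype with hf
  have hfinj : Function.Injective f := by
    rintro ⟨a, b⟩ ⟨c, d⟩ hEq
    rw [Prod.ext_iff] at hEq
    exact Prod.ext hEq.1 (Subtype.ext hEq.2)
  set N : Submodule R (M₁ × M₂) := LinearMap.range f with hN
  have eN : (M₁ × (K : Type v)) ≃ₗ[R] (N : Type v) := LinearEquiv.ofInjective f hfinj
  have hNbot : N ≠ ⊥ := by
    obtain ⟨x, hx⟩ := exists_ne (0 : M₁)
    refine (Submodule.ne_bot_iff _).mpr ⟨f (x, 0), LinearMap.mem_range_self f _, fun hc => hx ?_⟩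
    have := congrArg Prod.fst hc
    simpa [hf] using this
  have hNiso : ¬ Nonempty ((N : Type v) ≃ₗ[R] (M₁ × M₂)) := by
    rintro ⟨g⟩
    have hNtop : N = ⊤ := aux_coHopfian_self hfc N ⟨g.symm⟩
    have hKtop : K = ⊤ := by
      rw [eq_top_iff]
      intro m _
      have hmem : ((0 : M₁), m) ∈ N := by rw [hNtop]; trivial
      obtain ⟨⟨a, b⟩, hb⟩ := hmem
      have : (b : M₂) = m := congrArg Prod.snd hb
      rw [← this]
      exact b.2
    apply hKiso
    rw [hKtop]
    exact ⟨Submodule.topEquiv⟩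
  -- cuDim N < cuDim (M₁ × M₂)
  have hζ' := hζ
  rw [ModuleZeta] at hζ'
  rcases hζ' with ⟨-, hu⟩ | ⟨-, hstep⟩
  · exact absurd hu hnotunif
  obtain ⟨γ, hγA, hζN⟩ := hstep N hNbot hNiso
  have hcuN_lt : cuDim R (N : Type v) < cuDim R (M₁ × M₂) :=
    lt_of_le_of_lt (aux_cuDim_le hζN) hγA
  -- apply the induction hypothesis to M₁ × K
  have hfcP : IsFullyCoHopfianModule R (M₁ × (K : Type v)) :=
    aux_fullyCoHopfian_of_injective f hfinj hfc
  have hcuP : HasCUDim R (M₁ × (K : Type v)) := ⟨γ, aux_zeta_congr γ eN.symm hζN⟩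
  have hEq : cuDim R (M₁ × (K : Type v)) = cuDim R (N : Type v) := aux_cuDim_congr eN
  have hIH := IH (cuDim R (N : Type v)) (lt_of_lt_of_le hcuN_lt hle) M₁ (K : Type v)
    hfcP hcuP (le_of_eq hEq)
  calc cuDim R M₁ + β ≤ cuDim R M₁ + cuDim R (K : Type v) := add_le_add_right hKdim _
    _ ≤ cuDim R (M₁ × (K : Type v)) := hIH
    _ = cuDim R (N : Type v) := hEq
    _ < cuDim R (M₁ × M₂) := hcuN_lt

end Key


/-- If `M = M₁ ⊕ M₂` is fully coHopfian with couniserial dimension, then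
`c.u.dim(M₁) + c.u.dim(M₂) ≤ c.u.dim(M)` (ordinal addition). -/
theorem stmt5 (R : Type u) [Ring R] (M₁ M₂ : Type v) [AddCommGroup M₁] [Module R M₁]
    [AddCommGroup M₂] [Module R M₂]
    (hfc : IsFullyCoHopfianModule R (M₁ × M₂)) (h : HasCUDim R (M₁ × M₂)) :
    cuDim R M₁ + cuDim R M₂ ≤ cuDim R (M₁ × M₂) :=
  aux_key (cuDim R (M₁ × M₂)) M₁ M₂ hfc h (le_refl _)
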